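/- Let V be a finite-dimensional real vector space equipped with a nondegenerate symmetric bilinear form of Lorentz signature (an orthogonal basis has exactly one vector of negative norm-square, all others of positive norm-square). Let 𝔨 be a Lie subalgebra of End(V) (under the commutator bracket) all of whose elements are nilpotent endomorphisms that are skew-symmetric with respect to the form. Then 𝔨 is abelian: KL = LK for all K, L ∈ 𝔨. -/

import Mathlib

/-- A symmetric bilinear form is Lorentz: there is an orthogonal basis in which exactly one
basis vector has negative norm-square and all others have positive norm-square. -/
def IsLorentz {V : Type*} [AddCommGroup V] [Module ℝ V] (B : LinearMap.BilinForm ℝ V) : Prop :=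
  ∃ (m : ℕ) (b : Module.Basis (Fin (m + 1)) ℝ V) (i₀ : Fin (m + 1)),
    (∀ i j, i ≠ j → B (b i) (b j) = 0) ∧ B (b i₀) (b i₀) < 0 ∧
    ∀ i, i ≠ i₀ → 0 < B (b i) (b i)

theorem form_sum {V : Type*} [AddCommGroup V] [Module ℝ V] {m : ℕ}
    (B : LinearMap.BilinForm ℝ V) (b : Module.Basis (Fin (m+1)) ℝ V)
    (horth : ∀ i j, i ≠ j → B (b i) (b j) = 0) (v w : V) :
    B v w = ∑ i, b.repr v i * b.repr w i * B (b i) (b i) := by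
  conv_lhs => rw [← b.sum_repr v, ← b.sum_repr w]
  simp only [map_sum, map_smul, LinearMap.sum_apply, LinearMap.smul_apply, smul_eq_mul,
    Finset.mul_sum]
  refine Finset.sum_congr rfl fun i _ => ?_
  rw [Finset.sum_eq_single i]
  · ring
  · intro j _ hj
    rw [horth j i hj]; ring
  · simp

theorem null_coords {V : Type*} [AddCommGroup V] [Module ℝ V] {m : ℕ}
    (B : LinearMap.BilinForm ℝ V) (b : Module.Basis (Fin (m+1)) ℝ V) (i₀ : Fin (m+1))
    (horth : ∀ i j, i ≠ j → B (b i) (b j) = 0)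
    (hpos : ∀ i, i ≠ i₀ → 0 < B (b i) (b i))
    (v : V) (h0 : b.repr v i₀ = 0) (hvv : B v v = 0) : v = 0 := by
  rw [form_sum B b horth v v] at hvv
  have hnn : ∀ i ∈ Finset.univ, (0:ℝ) ≤ b.repr v i * b.repr v i * B (b i) (b i) := by
    intro i _
    by_cases hi : i = i₀
    · subst hi; rw [h0]; simp
    · exact mul_nonneg (mul_self_nonneg _) (hpos i hi).le
  have hall := (Finset.sum_eq_zero_iff_of_nonneg hnn).mp hvv
  have hzero : ∀ i, b.repr v i = 0 := by
    intro i
    by_cases hi : i = i₀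
    · subst hi; exact h0
    · have := hall i (Finset.mem_univ i)
      have hd := (hpos i hi).ne'
      rcases mul_eq_zero.mp this with h | h
      · rcases mul_eq_zero.mp h with h | h <;> exact h
      · exact absurd h hd
  have : b.repr v = 0 := Finsupp.ext hzero
  simpa using congrArg b.repr.symm this

theorem lorentz_nondeg {V : Type*} [AddCommGroup V] [Module ℝ V]
    (B : LinearMap.BilinForm ℝ V) (hL : IsLorentz B) :
    ∀ v : V, v ≠ 0 → ∃ y, B v y ≠ 0 := by
  obtain ⟨m, b, i₀, horth, hneg, hpos⟩ := hL
  intro v hv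
  by_contra h
  push_neg at h
  apply hv
  have hzero : ∀ i, b.repr v i = 0 := by
    intro i
    have := h (b i)
    rw [form_sum B b horth v (b i)] at this
    rw [Finset.sum_eq_single i] at this
    · have hd : B (b i) (b i) ≠ 0 := by
        by_cases hi : i = i₀
        · subst hi; exact hneg.ne
        · exact (hpos i hi).ne'
      simp only [Module.Basis.repr_self, Finsupp.single_eq_same, mul_one] at this
      rcases mul_eq_zero.mp this with h' | h'
      · exact h'
      · exact absurd h' hd
    · intro j _ hj
      simp [Finsupp.single_eq_of_ne hj]
    · simp
  have : b.repr v = 0 := Finsupp.ext hzero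
  simpa using congrArg b.repr.symm this

theorem lorentz_nulldep {V : Type*} [AddCommGroup V] [Module ℝ V]
    (B : LinearMap.BilinForm ℝ V) (hsymm : ∀ X Y : V, B X Y = B Y X) (hL : IsLorentz B) :
    ∀ v w : V, B v v = 0 → B w w = 0 → B v w = 0 → v ≠ 0 → ∃ t : ℝ, w = t • v := by
  obtain ⟨m, b, i₀, horth, hneg, hpos⟩ := hL
  intro v w hvv hww hvw hv
  have hx0 : b.repr v i₀ ≠ 0 := by
    intro h
    exact hv (null_coords B b i₀ horth hpos v h hvv)
  set z := b.repr v i₀ • w - b.repr w i₀ • v with hz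
  have hz0 : b.repr z i₀ = 0 := by
    simp [hz, mul_comm]
  have hzz : B z z = 0 := by
    have hwv : B w v = 0 := by rw [hsymm]; exact hvw
    simp only [hz, map_sub, map_smul, LinearMap.sub_apply, LinearMap.smul_apply, smul_eq_mul]
    rw [hvv, hww, hvw, hwv]; ring
  have : z = 0 := null_coords B b i₀ horth hpos z hz0 hzz
  refine ⟨b.repr w i₀ / b.repr v i₀, ?_⟩
  have h1 : b.repr v i₀ • w = b.repr w i₀ • v := by
    rwa [sub_eq_zero] at this
  calc w = (b.repr v i₀)⁻¹ • (b.repr v i₀ • w) := by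
        rw [smul_smul, inv_mul_cancel₀ hx0, one_smul]
    _ = (b.repr w i₀ / b.repr v i₀) • v := by
        rw [h1, smul_smul]; ring_nf


section
variable {V : Type*} [AddCommGroup V] [Module ℝ V]

theorem skew_zero_of_line (B : LinearMap.BilinForm ℝ V)
    (hsymm : ∀ X Y : V, B X Y = B Y X)
    (hnd : ∀ v : V, v ≠ 0 → ∃ y, B v y ≠ 0)
    (M : V →ₗ[ℝ] V) (hsk : ∀ x y, B (M x) y + B x (M y) = 0) (p : V)
    (hr : ∀ x, ∃ c : ℝ, M x = c • p) : M = 0 := by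
  by_cases hp : p = 0
  · ext x
    obtain ⟨c, hc⟩ := hr x
    simp [hc, hp]
  obtain ⟨y₀, hy₀⟩ := hnd p hp
  have hMy₀ : M y₀ = 0 := by
    obtain ⟨c, hc⟩ := hr y₀
    have h1 := hsk y₀ y₀
    rw [hc] at h1
    simp only [map_smul, LinearMap.smul_apply, smul_eq_mul] at h1
    rw [hsymm y₀ p] at h1
    have hc0 : c = 0 := by
      have : 2 * (c * B p y₀) = 0 := by linarith
      have := mul_eq_zero.mp this
      rcases this with h | h
      · norm_num at h
      · exact (mul_eq_zero.mp h).resolve_right hy₀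
    rw [hc, hc0, zero_smul]
  ext x
  obtain ⟨c, hc⟩ := hr x
  have h1 := hsk x y₀
  rw [hc, hMy₀] at h1
  simp only [map_smul, LinearMap.smul_apply, smul_eq_mul, map_zero] at h1
  have hc0 : c = 0 := by
    have : c * B p y₀ = 0 := by linarith
    exact (mul_eq_zero.mp this).resolve_right hy₀
  simp [hc, hc0]

theorem pow_skew (B : LinearMap.BilinForm ℝ V)
    (M : V →ₗ[ℝ] V) (hsk : ∀ x y, B (M x) y + B x (M y) = 0) :
    ∀ (n : ℕ) (x y : V), B ((M ^ n) x) y = (-1 : ℝ) ^ n * B x ((M ^ n) y) := by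
  intro n
  induction n with
  | zero => intro x y; simp
  | succ n ih =>
    intro x y
    have h1 : (M ^ (n+1)) x = (M ^ n) (M x) := by
      rw [pow_succ, Module.End.mul_apply]
    have h2 : (M ^ (n+1)) y = M ((M ^ n) y) := by
      rw [pow_succ', Module.End.mul_apply]
    rw [h1, ih (M x) y, h2]
    have h3 : B (M x) ((M ^ n) y) = - B x (M ((M ^ n) y)) := by
      have := hsk x ((M ^ n) y); linarith
    rw [h3]; ring

end

section
variable {V : Type*} [AddCommGroup V] [Module ℝ V]
theorem cube_zero (B : LinearMap.BilinForm ℝ V)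
    (hdep : ∀ v w : V, B v v = 0 → B w w = 0 → B v w = 0 → v ≠ 0 → ∃ t : ℝ, w = t • v)
    (M : V →ₗ[ℝ] V) (hsk : ∀ x y, B (M x) y + B x (M y) = 0)
    (hn : IsNilpotent M) : M ^ 3 = 0 := by
  classical
  obtain ⟨n0, hn0⟩ := hn
  have hex : ∃ n, M ^ n = 0 := ⟨n0, hn0⟩
  set k := Nat.find hex with hkdef
  have hk : M ^ k = 0 := Nat.find_spec hex
  have hmin : ∀ m < k, M ^ m ≠ 0 := fun m hm => Nat.find_min hex hm
  by_cases hk3 : k ≤ 3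
  · exact pow_eq_zero_of_le hk3 hk
  push_neg at hk3
  have hk4 : 4 ≤ k := hk3
  exfalso
  -- total isotropy of image of M^(k-2)
  have hiso : ∀ x y : V, B ((M ^ (k-2)) x) ((M ^ (k-2)) y) = 0 := by
    intro x y
    rw [pow_skew B M hsk (k-2) x ((M ^ (k-2)) y)]
    have h2k : (M ^ (k-2)) ((M ^ (k-2)) y) = (M ^ (k-2+(k-2))) y := by
      rw [pow_add, Module.End.mul_apply]
    rw [h2k]
    have hz : M ^ (k-2+(k-2)) = 0 := by
      apply pow_eq_zero_of_le _ hk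
      omega
    rw [hz]
    simp
  -- p' := M^(k-1) w ≠ 0
  have hne : M ^ (k-1) ≠ 0 := hmin (k-1) (by omega)
  have hw : ∃ w, (M ^ (k-1)) w ≠ 0 := by
    by_contra h
    push_neg at h
    exact hne (LinearMap.ext fun w => h w)
  obtain ⟨w, hw⟩ := hw
  set p' := (M ^ (k-1)) w with hp'
  have hps : p' = (M ^ (k-2)) (M w) := by
    rw [hp']
    have : M ^ (k-1) = M ^ (k-2) * M := by
      rw [← pow_succ]
      congr 1
      omega
    rw [this, Module.End.mul_apply]
  have hMp' : M p' = 0 := by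
    have h5 : M * (M ^ (k-1)) = M ^ k := by
      rw [← pow_succ']
      congr 1
      omega
    have h6 : M ((M ^ (k-1)) w) = (M ^ k) w := by
      rw [← h5, Module.End.mul_apply]
    rw [hp', h6, hk, LinearMap.zero_apply]
  -- contradiction: M^(k-1) = 0
  apply hmin (k-1) (by omega)
  ext u
  have hdep' := hdep p' ((M ^ (k-2)) u) (by rw [hps]; exact hiso (M w) (M w))
    (hiso u u) (by rw [hps]; exact hiso (M w) u) hw
  obtain ⟨t, ht⟩ := hdep'
  have : (M ^ (k-1)) u = M ((M ^ (k-2)) u) := by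
    have : M ^ (k-1) = M * M ^ (k-2) := by
      rw [← pow_succ']
      congr 1
      omega
    rw [this, Module.End.mul_apply]
  rw [LinearMap.zero_apply, this, ht, map_smul, hMp', smul_zero]

end

section
variable {V : Type*} [AddCommGroup V] [Module ℝ V]
/-- Structure of a nonzero nilpotent skew endomorphism of a Lorentz space. -/
theorem nilskew_structure (B : LinearMap.BilinForm ℝ V)
    (hsymm : ∀ X Y : V, B X Y = B Y X)
    (hnd : ∀ v : V, v ≠ 0 → ∃ y, B v y ≠ 0)
    (hdep : ∀ v w : V, B v v = 0 → B w w = 0 → B v w = 0 → v ≠ 0 → ∃ t : ℝ, w = t • v)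
    (M : V →ₗ[ℝ] V) (hsk : ∀ x y, B (M x) y + B x (M y) = 0)
    (hn : IsNilpotent M) (hM : M ≠ 0) :
    ∃ (p : V) (c : ℝ), p ≠ 0 ∧ c ≠ 0 ∧ M p = 0 ∧ B p p = 0 ∧
      (∀ x, M (M x) = (c * B x p) • p) ∧ (∀ x, B (M x) p = 0) ∧
      (∀ x, B x p = 0 → ∃ t : ℝ, M x = t • p) := by
  have skw : ∀ x y, B (M x) y = - B x (M y) := by
    intro x y; have := hsk x y; linarith
  have h3 : ∀ x, M (M (M x)) = 0 := by
    intro x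
    have h := congrArg (fun f => f x) (cube_zero B hdep M hsk hn)
    simpa [pow_succ, Module.End.mul_apply] using h
  have h2ne : ∃ x₀, M (M x₀) ≠ 0 := by
    by_contra h
    push_neg at h
    have hisoM : ∀ x y, B (M x) (M y) = 0 := by
      intro x y; rw [skw, h y, map_zero, neg_zero]
    apply hM
    by_cases hex : ∃ x₁, M x₁ ≠ 0
    · obtain ⟨x₁, hx₁⟩ := hex
      exact skew_zero_of_line B hsymm hnd M hsk (M x₁) fun x =>
        hdep (M x₁) (M x) (hisoM x₁ x₁) (hisoM x x) (hisoM x₁ x) hx₁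
    · push_neg at hex
      exact LinearMap.ext fun x => hex x
  obtain ⟨x₀, hx₀⟩ := h2ne
  set p := M (M x₀) with hpdef
  have hp_ne : p ≠ 0 := hx₀
  have hMp : M p = 0 := h3 x₀
  have hBMp : ∀ x, B (M x) p = 0 := by
    intro x; rw [skw, hMp, map_zero, neg_zero]
  have hpp : B p p = 0 := hBMp (M x₀)
  have hiso2 : ∀ x y, B (M (M x)) (M (M y)) = 0 := by
    intro x y
    rw [skw (M x) (M (M y)), h3 y, map_zero, neg_zero]
  have himp2 : ∀ x, ∃ t : ℝ, M (M x) = t • p := fun x =>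
    hdep p (M (M x)) (hiso2 x₀ x₀) (hiso2 x x) (hiso2 x₀ x) hp_ne
  obtain ⟨y₀, hy₀⟩ := hnd p hp_ne
  obtain ⟨t₀, ht₀⟩ := himp2 y₀
  have hform : ∀ x, M (M x) = (t₀ / B p y₀ * B x p) • p := by
    intro x
    obtain ⟨t, ht⟩ := himp2 x
    have e1 : B (M (M x)) y₀ = t * B p y₀ := by rw [ht]; simp
    have e2 : B (M (M x)) y₀ = t₀ * B x p := by
      have s1 : B (M (M x)) y₀ = - B (M x) (M y₀) := skw (M x) y₀
      have s2 : B (M x) (M y₀) = - B x (M (M y₀)) := skw x (M y₀)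
      rw [s1, s2, neg_neg, ht₀]
      simp
    have ht' : t = t₀ / B p y₀ * B x p := by
      field_simp
      rw [← e1, e2]
    rw [ht, ht']
  have hc_ne : t₀ / B p y₀ ≠ 0 := by
    intro hc
    apply hx₀
    rw [hpdef, hform x₀, hc, zero_mul, zero_smul]
  refine ⟨p, t₀ / B p y₀, hp_ne, hc_ne, hMp, hpp, hform, hBMp, ?_⟩
  intro x hxp
  have h20 : M (M x) = 0 := by
    rw [hform x, hxp, mul_zero, zero_smul]
  have vnull : B (M x) (M x) = 0 := by
    rw [skw, h20, map_zero, neg_zero]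
  have hpv : B p (M x) = 0 := by
    rw [hsymm]; exact hBMp x
  exact hdep p (M x) hpp vnull hpv hp_ne

end


section
variable {V : Type*} [AddCommGroup V] [Module ℝ V] [FiniteDimensional ℝ V]

theorem trace_smulRight' (f : V →ₗ[ℝ] ℝ) (v : V) :
    LinearMap.trace ℝ V (f.smulRight v) = f v := by
  let b := Module.finBasis ℝ V
  rw [LinearMap.trace_eq_matrix_trace ℝ b, Matrix.trace]
  have hdiag : ∀ i, (LinearMap.toMatrix b b (f.smulRight v)).diag i
      = f (b i) * b.repr v i := by
    intro i
    simp [Matrix.diag, LinearMap.toMatrix_apply]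
  rw [Finset.sum_congr rfl fun i _ => hdiag i]
  conv_rhs => rw [← b.sum_repr v]
  rw [map_sum]
  refine Finset.sum_congr rfl fun i _ => ?_
  simp [mul_comm]

theorem trace_nil_sq (M : V →ₗ[ℝ] V) (hn : IsNilpotent M) :
    LinearMap.trace ℝ V (M * M) = 0 := by
  have h : IsNilpotent (M * M) := by
    obtain ⟨n, hn⟩ := hn
    exact ⟨n, by rw [(Commute.refl M).mul_pow, hn, mul_zero]⟩
  exact (LinearMap.isNilpotent_trace_of_isNilpotent h).eq_zero

theorem tcyc (a c : V →ₗ[ℝ] V) :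
    LinearMap.trace ℝ V (a * c) = LinearMap.trace ℝ V (c * a) := by
  rw [Module.End.mul_eq_comp, Module.End.mul_eq_comp, LinearMap.trace_comp_comm']

end

/-- a Lie subalgebra of `End(V)` consisting of nilpotent endomorphisms that are
skew-symmetric with respect to a Lorentz form is abelian. -/
theorem stmt10 {V : Type*} [AddCommGroup V] [Module ℝ V] [FiniteDimensional ℝ V]
    (B : LinearMap.BilinForm ℝ V)
    (hsymm : ∀ X Y : V, B X Y = B Y X)
    (hLorentz : IsLorentz B)
    (𝔨 : Submodule ℝ (V →ₗ[ℝ] V))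
    (hclosed : ∀ K ∈ 𝔨, ∀ L ∈ 𝔨, K ∘ₗ L - L ∘ₗ K ∈ 𝔨)
    (hnil : ∀ K ∈ 𝔨, IsNilpotent K)
    (hskew : ∀ K ∈ 𝔨, ∀ X Y : V, B (K X) Y + B X (K Y) = 0) :
    ∀ K ∈ 𝔨, ∀ L ∈ 𝔨, K ∘ₗ L = L ∘ₗ K := by
  intro K hK L hL
  by_cases hK0 : K = 0
  · simp [hK0]
  by_cases hL0 : L = 0
  · simp [hL0]
  have hnd := lorentz_nondeg B hLorentz
  have hdep := lorentz_nulldep B hsymm hLorentz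
  obtain ⟨p, cK, hp_ne, hcK, hKp, hpp, hKform, hKBp, hKline⟩ :=
    nilskew_structure B hsymm hnd hdep K (hskew K hK) (hnil K hK) hK0
  obtain ⟨q, cL, hq_ne, hcL, hLq, hqq, hLform, hLBq, hLline⟩ :=
    nilskew_structure B hsymm hnd hdep L (hskew L hL) (hnil L hL) hL0
  -- cube identities
  have cube : ∀ M ∈ 𝔨, M ^ 3 = 0 := fun M hM =>
    cube_zero B hdep M (hskew M hM) (hnil M hM)
  have hK3 : K ^ 3 = 0 := cube K hK
  have hL3 : L ^ 3 = 0 := cube L hL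
  have hsum : (K + L) ^ 3 = 0 := cube _ (add_mem hK hL)
  have hdiff : (K - L) ^ 3 = 0 := cube _ (sub_mem hK hL)
  have h1 : (K*K*L + K*L*K + L*K*K) + (K*L*L + L*K*L + L*L*K) = 0 := by
    have hx : (K + L) ^ 3 =
        K ^ 3 + ((K*K*L + K*L*K + L*K*K) + (K*L*L + L*K*L + L*L*K)) + L ^ 3 := by
      noncomm_ring
    rw [hsum, hK3, hL3] at hx
    simpa using hx.symm
  have h2 : -(K*K*L + K*L*K + L*K*K) + (K*L*L + L*K*L + L*L*K) = 0 := by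
    have hx : (K - L) ^ 3 =
        K ^ 3 + (-(K*K*L + K*L*K + L*K*K) + (K*L*L + L*K*L + L*L*K)) - L ^ 3 := by
      noncomm_ring
    rw [hdiff, hK3, hL3] at hx
    simpa using hx.symm
  have hS1 : K*K*L + K*L*K + L*K*K = 0 := by
    have hdouble : (K*K*L + K*L*K + L*K*K) + (K*K*L + K*L*K + L*K*K) = 0 := by
      calc (K*K*L + K*L*K + L*K*K) + (K*K*L + K*L*K + L*K*K)
          = ((K*K*L + K*L*K + L*K*K) + (K*L*L + L*K*L + L*L*K)) -
            (-(K*K*L + K*L*K + L*K*K) + (K*L*L + L*K*L + L*L*K)) := by abel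
        _ = 0 := by rw [h1, h2, sub_zero]
    have h2s : (2:ℝ) • (K*K*L + K*L*K + L*K*K) = 0 := by
      rw [two_smul]; exact hdouble
    rcases smul_eq_zero.mp h2s with h | h
    · norm_num at h
    · exact h
  -- trace relations
  set T := LinearMap.trace ℝ V with hT
  have hS1L : K*K*L*L + K*L*K*L + L*K*K*L = 0 := by
    have hx := congrArg (· * L) hS1
    simpa [add_mul] using hx
  have ht1 : T (K*K*L*L) + T (K*L*K*L) + T (L*K*K*L) = 0 := by
    have hx := congrArg T hS1L
    simpa [map_add] using hx
  have hr1 : T (L*K*K*L) = T (K*K*L*L) := by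
    have h := tcyc L (K*K*L)
    have e : L*(K*K*L) = L*K*K*L := by noncomm_ring
    rw [e] at h
    exact h
  have hM𝔨 : K ∘ₗ L - L ∘ₗ K ∈ 𝔨 := hclosed K hK L hL
  have hMmul : K ∘ₗ L - L ∘ₗ K = K*L - L*K := rfl
  have hMM : (K*L - L*K) * (K*L - L*K) =
      K*L*K*L - K*L*L*K - (L*K*K*L - L*K*L*K) := by noncomm_ring
  have ht2 : T ((K*L - L*K) * (K*L - L*K)) = 0 := by
    have := trace_nil_sq (K*L - L*K) (by rw [← hMmul]; exact hnil _ hM𝔨)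
    exact this
  have hr2 : T (K*L*L*K) = T (K*K*L*L) := by
    have h := tcyc (K*L*L) K
    have e : K*(K*L*L) = K*K*L*L := by noncomm_ring
    rw [e] at h
    exact h
  have hr3 : T (L*K*L*K) = T (K*L*K*L) := by
    have h := tcyc L (K*L*K)
    have e : L*(K*L*K) = L*K*L*K := by noncomm_ring
    rw [e] at h
    exact h
  have ht3 : T (K*L*K*L) - T (K*L*L*K) - (T (L*K*K*L) - T (L*K*L*K)) = 0 := by
    rw [← map_sub, ← map_sub, ← map_sub, ← hMM]
    exact ht2
  have hT1 : T (K*K*L*L) = 0 := by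
    rw [hr1] at ht1
    rw [hr2, hr1, hr3] at ht3
    linarith
  -- compute the trace explicitly
  have hword : K*K*L*L = ((cL * (cK * B q p)) • (B.flip q)).smulRight p := by
    ext x
    have e1 : (K*K*L*L) x = K (K (L (L x))) := by
      simp [Module.End.mul_apply]
    rw [e1, hLform x, map_smul, map_smul, hKform q]
    simp only [LinearMap.smulRight_apply, LinearMap.smul_apply, LinearMap.flip_apply,
      smul_eq_mul, smul_smul]
    congr 1
    have hfl : (B.flip q) x = B x q := rfl
    rw [hfl]
    ring
  have hval : T (K*K*L*L) = cL * (cK * B q p) * B p q := by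
    rw [hword, hT, trace_smulRight']
    simp [LinearMap.flip_apply]
  have hBpq : B p q = 0 := by
    rw [hval] at hT1
    have hqp : B q p = B p q := hsymm q p
    rw [hqp] at hT1
    rcases mul_eq_zero.mp hT1 with h | h
    · rcases mul_eq_zero.mp h with h' | h'
      · exact absurd h' hcL
      · rcases mul_eq_zero.mp h' with h'' | h''
        · exact absurd h'' hcK
        · exact h''
    · exact h
  -- common null line
  obtain ⟨t, hqt⟩ := hdep p q hpp hqq hBpq hp_ne
  have ht_ne : t ≠ 0 := by
    intro h
    apply hq_ne
    rw [hqt, h, zero_smul]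
  -- the bracket has rank ≤ 1, is skew, hence zero
  have hMsk := hskew _ hM𝔨
  have hr : ∀ x, ∃ s : ℝ, (K ∘ₗ L - L ∘ₗ K) x = s • p := by
    intro x
    have hLxq : B (L x) q = 0 := hLBq x
    have hLxp : B (L x) p = 0 := by
      rw [hqt] at hLxq
      simp only [map_smul, smul_eq_mul] at hLxq
      exact (mul_eq_zero.mp hLxq).resolve_left ht_ne
    obtain ⟨s₁, hs₁⟩ := hKline (L x) hLxp
    have hKxq : B (K x) q = 0 := by
      rw [hqt, map_smul, smul_eq_mul, hKBp x, mul_zero]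
    obtain ⟨s₂, hs₂⟩ := hLline (K x) hKxq
    refine ⟨s₁ - s₂ * t, ?_⟩
    have e2 : (K ∘ₗ L - L ∘ₗ K) x = K (L x) - L (K x) := by
      simp [LinearMap.sub_apply]
    rw [e2, hs₁, hs₂, hqt, smul_smul, sub_smul]
  have hM0 : K ∘ₗ L - L ∘ₗ K = 0 :=
    skew_zero_of_line B hsymm hnd _ hMsk p hr
  exact sub_eq_zero.mp hM0
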